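/- In a two-dimensional strictly convex real normed space, for any a ≠ b on a line L and points c, d on the same side of L, if ||a−c|| = ||a−d|| and ||b−c|| = ||b−d||, then c = d. -/

import Mathlib

namespace StrictConvexSameSide

variable {Y : Type*} [NormedAddCommGroup Y] [NormedSpace ℝ Y]

/-- In a 2-dimensional space, the kernel of a nonzero functional vanishing on `u ≠ 0`
is exactly the span of `u`. -/
private lemma ker_span (hdim : Module.finrank ℝ Y = 2) (φ : Y →ₗ[ℝ] ℝ) (hφ : φ ≠ 0)
    {u : Y} (hu : u ≠ 0) (hφu : φ u = 0) :
    ∀ x : Y, φ x = 0 → ∃ s : ℝ, x = s • u := by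
  haveI : FiniteDimensional ℝ Y := FiniteDimensional.of_finrank_eq_succ (n := 1) hdim
  obtain ⟨y, hy⟩ : ∃ y, φ y ≠ 0 := by
    by_contra h
    push_neg at h
    exact hφ (by ext z; simp [h z])
  have hrange : LinearMap.range φ = ⊤ := by
    rw [Submodule.eq_top_iff']
    intro x
    exact ⟨(x / φ y) • y, by rw [map_smul, smul_eq_mul]; field_simp⟩
  have hr1 : Module.finrank ℝ (LinearMap.range φ) = 1 := by
    rw [hrange]
    simp [Module.finrank_self]
  have hker1 : Module.finrank ℝ (LinearMap.ker φ) = 1 := by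
    have := LinearMap.finrank_range_add_finrank_ker φ
    rw [hdim, hr1] at this
    omega
  have hle : Submodule.span ℝ {u} ≤ LinearMap.ker φ := by
    rw [Submodule.span_le]
    intro z hz
    simp only [Set.mem_singleton_iff] at hz
    simp [hz, LinearMap.mem_ker, hφu]
  have hspan : Submodule.span ℝ {u} = LinearMap.ker φ :=
    Submodule.eq_of_le_of_finrank_le hle (by rw [hker1, finrank_span_singleton hu])
  intro x hx
  have : x ∈ Submodule.span ℝ ({u} : Set Y) := by rw [hspan]; exact hx
  obtain ⟨s, hs⟩ := Submodule.mem_span_singleton.mp this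
  exact ⟨s, hs.symm⟩

/-- The case where (relative to the intersection point `p` of the two lines) the points
`a = p + (B+1)•u`, `b = p + B•u` lie on one ray and `c = p + C•v`, `d = p + (C+1)•v` on
another. The four norms are `‖a-c‖, ‖a-d‖, ‖b-c‖, ‖b-d‖`. -/
private lemma aux_far
    (hsc : ∀ a b : Y, a ≠ 0 → b ≠ 0 → ‖a + b‖ = ‖a‖ + ‖b‖ → ∃ γ : ℝ, 0 < γ ∧ a = γ • b)
    (u v : Y) (hind : ∀ s t : ℝ, s • u + t • v = 0 → s = 0 ∧ t = 0)
    (B C r ρ : ℝ) (hB : 0 < B) (hC : 0 < C)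
    (h1 : ‖(B+1) • u - C • v‖ = r) (h2 : ‖(B+1) • u - (C+1) • v‖ = r)
    (h3 : ‖B • u - C • v‖ = ρ) (h4 : ‖B • u - (C+1) • v‖ = ρ) : False := by
  have hS0 : (0:ℝ) < B + C + 1 := by linarith
  set X : Y := (C+1) • ((B+1) • u - C • v) with hX
  set Z : Y := (B+1) • (B • u - (C+1) • v) with hZ
  have hXZ : X + Z = (B + C + 1) • ((B+1) • u - (C+1) • v) := by rw [hX, hZ]; module
  have hnX : ‖X‖ = (C+1) * r := by rw [hX, norm_smul_of_nonneg (by linarith), h1]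
  have hnZ : ‖Z‖ = (B+1) * ρ := by rw [hZ, norm_smul_of_nonneg (by linarith), h4]
  have hnXZ : ‖X + Z‖ = (B + C + 1) * r := by
    rw [hXZ, norm_smul_of_nonneg (le_of_lt hS0), h2]
  have T1 : (B + C + 1) * r ≤ (C+1)*r + (B+1)*ρ := by
    calc (B + C + 1) * r = ‖X + Z‖ := hnXZ.symm
      _ ≤ ‖X‖ + ‖Z‖ := norm_add_le X Z
      _ = (C+1)*r + (B+1)*ρ := by rw [hnX, hnZ]
  have hXZ2 : (C • (B • u - (C+1) • v)) + (B • ((B+1) • u - C • v))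
      = (B + C + 1) • (B • u - C • v) := by module
  have T2 : (B + C + 1) * ρ ≤ C*ρ + B*r := by
    calc (B + C + 1) * ρ = ‖(B + C + 1) • (B • u - C • v)‖ := by
          rw [norm_smul_of_nonneg (le_of_lt hS0), h3]
      _ = ‖(C • (B • u - (C+1) • v)) + (B • ((B+1) • u - C • v))‖ := by rw [hXZ2]
      _ ≤ ‖C • (B • u - (C+1) • v)‖ + ‖B • ((B+1) • u - C • v)‖ := norm_add_le _ _
      _ = C*ρ + B*r := by
          rw [norm_smul_of_nonneg (le_of_lt hC), norm_smul_of_nonneg (le_of_lt hB), h4, h1]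
  have heq : B * r = (B+1) * ρ := by linarith
  have hXne : X ≠ 0 := by
    intro h
    have h0 : ((C+1)*(B+1)) • u + (-((C+1)*C)) • v = 0 := by rw [← h, hX]; module
    obtain ⟨e1, _⟩ := hind _ _ h0
    nlinarith
  have hZne : Z ≠ 0 := by
    intro h
    have h0 : ((B+1)*B) • u + (-((B+1)*(C+1))) • v = 0 := by rw [← h, hZ]; module
    obtain ⟨_, e2⟩ := hind _ _ h0
    nlinarith
  have heqn : ‖X + Z‖ = ‖X‖ + ‖Z‖ := by rw [hnXZ, hnX, hnZ]; linarith
  obtain ⟨γ, hγ, hγeq⟩ := hsc X Z hXne hZne heqn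
  have h0 : ((C+1)*(B+1) - γ*((B+1)*B)) • u + (-((C+1)*C) + γ*((B+1)*(C+1))) • v = 0 := by
    have hz : X - γ • Z = 0 := by rw [hγeq, sub_self]
    rw [← hz, hX, hZ]; module
  obtain ⟨e1, e2⟩ := hind _ _ h0
  have k1 : γ * B = C + 1 := by
    have h' : (γ * B) * (B + 1) = (C + 1) * (B + 1) := by ring_nf; ring_nf at e1; linarith
    exact mul_right_cancel₀ (by linarith) h'
  have k2 : γ * (B + 1) = C := by
    have h' : (γ * (B + 1)) * (C + 1) = C * (C + 1) := by ring_nf; ring_nf at e2; linarith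
    exact mul_right_cancel₀ (by linarith) h'
  nlinarith

/-- The case where the intersection point `p` lies weakly between `a` and `b`:
`a = p - s•u`, `b = p + (1-s)•u` with `0 ≤ s ≤ 1`, while `c = p + C•v`, `d = p + (C+1)•v`. -/
private lemma aux_mid
    (hsc : ∀ a b : Y, a ≠ 0 → b ≠ 0 → ‖a + b‖ = ‖a‖ + ‖b‖ → ∃ γ : ℝ, 0 < γ ∧ a = γ • b)
    (u v : Y) (hind : ∀ s t : ℝ, s • u + t • v = 0 → s = 0 ∧ t = 0)
    (s C r ρ : ℝ) (hs0 : 0 ≤ s) (hs1 : s ≤ 1) (hC : 0 < C)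
    (h1 : ‖(-s) • u - C • v‖ = r) (h2 : ‖(-s) • u - (C+1) • v‖ = r)
    (h3 : ‖(1-s) • u - C • v‖ = ρ) (h4 : ‖(1-s) • u - (C+1) • v‖ = ρ) : False := by
  have hu0 : u ≠ 0 := by
    intro h
    exact one_ne_zero ((hind 1 0 (by simp [h])).1)
  have hv0 : v ≠ 0 := by
    intro h
    exact one_ne_zero ((hind 0 1 (by simp [h])).2)
  have id1 : (C+1) • ((-s) • u - C • v) = (-s) • u + C • ((-s) • u - (C+1) • v) := by module
  have Tr : r ≤ s * ‖u‖ := by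
    have hle : (C+1) * r ≤ s * ‖u‖ + C * r := by
      calc (C+1) * r = ‖(C+1) • ((-s) • u - C • v)‖ := by
            rw [norm_smul_of_nonneg (by linarith), h1]
        _ = ‖(-s) • u + C • ((-s) • u - (C+1) • v)‖ := by rw [id1]
        _ ≤ ‖(-s) • u‖ + ‖C • ((-s) • u - (C+1) • v)‖ := norm_add_le _ _
        _ = s * ‖u‖ + C * r := by
            rw [norm_smul, norm_smul_of_nonneg (le_of_lt hC), h2,
              Real.norm_eq_abs, abs_of_nonpos (by linarith), neg_neg]
    linarith
  have id2 : (C+1) • ((1-s) • u - C • v) = (1-s) • u + C • ((1-s) • u - (C+1) • v) := by module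
  have Tρ : ρ ≤ (1-s) * ‖u‖ := by
    have hle : (C+1) * ρ ≤ (1-s) * ‖u‖ + C * ρ := by
      calc (C+1) * ρ = ‖(C+1) • ((1-s) • u - C • v)‖ := by
            rw [norm_smul_of_nonneg (by linarith), h3]
        _ = ‖(1-s) • u + C • ((1-s) • u - (C+1) • v)‖ := by rw [id2]
        _ ≤ ‖(1-s) • u‖ + ‖C • ((1-s) • u - (C+1) • v)‖ := norm_add_le _ _
        _ = (1-s) * ‖u‖ + C * ρ := by
            rw [norm_smul_of_nonneg (by linarith), norm_smul_of_nonneg (le_of_lt hC), h4]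
    linarith
  have Tu : ‖u‖ ≤ r + ρ := by
    calc ‖u‖ = ‖((1-s) • u - C • v) - ((-s) • u - C • v)‖ := by
          congr 1; module
      _ ≤ ‖(1-s) • u - C • v‖ + ‖(-s) • u - C • v‖ := norm_sub_le _ _
      _ = ρ + r := by rw [h3, h1]
      _ = r + ρ := by ring
  have hr : r = s * ‖u‖ := by linarith
  have hρ : ρ = (1-s) * ‖u‖ := by linarith
  rcases eq_or_lt_of_le hs0 with hs | hs
  · rw [← hs] at h1 hr
    simp only [neg_zero, zero_smul, zero_sub, norm_neg, zero_mul] at h1 hr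
    rw [norm_smul_of_nonneg (le_of_lt hC)] at h1
    have hv : 0 < ‖v‖ := norm_pos_iff.mpr hv0
    nlinarith
  rcases eq_or_lt_of_le hs1 with hs' | hs'
  · rw [hs'] at h3 hρ
    simp only [sub_self, zero_smul, zero_sub, norm_neg] at h3 hρ
    rw [norm_smul_of_nonneg (le_of_lt hC)] at h3
    have hv : 0 < ‖v‖ := norm_pos_iff.mpr hv0
    nlinarith
  have hXne : (-s) • u ≠ 0 := by
    simp only [ne_eq, smul_eq_zero, not_or]
    exact ⟨by intro h; linarith, hu0⟩
  have hZne : C • ((-s) • u - (C+1) • v) ≠ 0 := by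
    intro h
    have h0 : (C * (-s)) • u + (-(C*(C+1))) • v = 0 := by rw [← h]; module
    have := (hind _ _ h0).2
    nlinarith
  have heqn : ‖(-s) • u + C • ((-s) • u - (C+1) • v)‖
      = ‖(-s) • u‖ + ‖C • ((-s) • u - (C+1) • v)‖ := by
    rw [← id1, norm_smul_of_nonneg (by linarith : (0:ℝ) ≤ C+1), h1,
      norm_smul, norm_smul_of_nonneg (le_of_lt hC), h2,
      Real.norm_eq_abs, abs_of_nonpos (by linarith), neg_neg, hr]
    ring
  obtain ⟨γ, hγ, hγeq⟩ := hsc _ _ hXne hZne heqn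
  have h0 : (-s - γ*(C*(-s))) • u + (γ*(C*(C+1))) • v = 0 := by
    have hz : (-s) • u - γ • (C • ((-s) • u - (C+1) • v)) = 0 := sub_eq_zero_of_eq hγeq
    rw [← hz]; module
  have h2' := (hind _ _ h0).2
  have : 0 < γ * (C * (C + 1)) := by positivity
  linarith

/-- The case where the segment `c d` is parallel to the line through `a` and `b`:
`a`, `b = a + u`, `c = a + w`, `d = c + μ•u` with `μ > 0`. -/
private lemma aux_par
    (hsc : ∀ a b : Y, a ≠ 0 → b ≠ 0 → ‖a + b‖ = ‖a‖ + ‖b‖ → ∃ γ : ℝ, 0 < γ ∧ a = γ • b)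
    (u w : Y) (hind : ∀ s t : ℝ, s • w + t • u = 0 → s = 0 ∧ t = 0)
    (μ r ρ : ℝ) (hμ : 0 < μ)
    (h1 : ‖w‖ = r) (h2 : ‖w + μ • u‖ = r)
    (h3 : ‖w - u‖ = ρ) (h4 : ‖w + μ • u - u‖ = ρ) : False := by
  have id1 : (μ+1) • w = μ • (w - u) + (w + μ • u) := by module
  have T1 : (μ+1) * r ≤ μ * ρ + r := by
    calc (μ+1) * r = ‖(μ+1) • w‖ := by rw [norm_smul_of_nonneg (by linarith), h1]
      _ = ‖μ • (w - u) + (w + μ • u)‖ := by rw [id1]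
      _ ≤ ‖μ • (w - u)‖ + ‖w + μ • u‖ := norm_add_le _ _
      _ = μ * ρ + r := by rw [norm_smul_of_nonneg (le_of_lt hμ), h3, h2]
  have id2 : (μ+1) • (w + μ • u - u) = μ • (w + μ • u) + (w - u) := by module
  have T2 : (μ+1) * ρ ≤ μ * r + ρ := by
    calc (μ+1) * ρ = ‖(μ+1) • (w + μ • u - u)‖ := by
          rw [norm_smul_of_nonneg (by linarith), h4]
      _ = ‖μ • (w + μ • u) + (w - u)‖ := by rw [id2]
      _ ≤ ‖μ • (w + μ • u)‖ + ‖w - u‖ := norm_add_le _ _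
      _ = μ * r + ρ := by rw [norm_smul_of_nonneg (le_of_lt hμ), h2, h3]
  have hrρ : r = ρ := by nlinarith
  have hXne : μ • (w - u) ≠ 0 := by
    intro h
    have h0 : (μ) • w + (-μ) • u = 0 := by rw [← h]; module
    have := (hind _ _ h0).1
    linarith
  have hZne : w + μ • u ≠ 0 := by
    intro h
    have h0 : (1:ℝ) • w + μ • u = 0 := by rw [← h]; module
    exact one_ne_zero (hind _ _ h0).1
  have heqn : ‖μ • (w - u) + (w + μ • u)‖ = ‖μ • (w - u)‖ + ‖w + μ • u‖ := by
    rw [← id1, norm_smul_of_nonneg (by linarith : (0:ℝ) ≤ μ+1), h1,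
      norm_smul_of_nonneg (le_of_lt hμ), h3, h2, hrρ]
    ring
  obtain ⟨γ, hγ, hγeq⟩ := hsc _ _ hXne hZne heqn
  have h0 : (μ - γ) • w + (-μ - γ*μ) • u = 0 := by
    have hz : μ • (w - u) - γ • (w + μ • u) = 0 := sub_eq_zero_of_eq hγeq
    rw [← hz]; module
  have h2' := (hind _ _ h0).2
  nlinarith

/-- The transversal case: the line through `c, d` meets the line `L`, and (after possibly
swapping `c` and `d`) the intersection parameter gives `0 < φ(c-a) / φ(d-c)`. -/
private lemma caseB2
    (hsc : ∀ a b : Y, a ≠ 0 → b ≠ 0 → ‖a + b‖ = ‖a‖ + ‖b‖ → ∃ γ : ℝ, 0 < γ ∧ a = γ • b)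
    (a b c d : Y) (φ : Y →ₗ[ℝ] ℝ) (hu : b - a ≠ 0)
    (hker : ∀ x : Y, φ x = 0 → ∃ s : ℝ, x = s • (b - a))
    (hφu : φ (b - a) = 0) (hφv : φ (d - c) ≠ 0)
    (hpos : 0 < φ (c - a) * φ (d - c))
    (hac : ‖a - c‖ = ‖a - d‖) (hbc : ‖b - c‖ = ‖b - d‖) : False := by
  set C : ℝ := φ (c - a) / φ (d - c) with hCdef
  have hC : 0 < C := by
    rcases mul_pos_iff.mp hpos with ⟨ha1, ha2⟩ | ⟨ha1, ha2⟩
    · exact div_pos ha1 ha2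
    · exact div_pos_of_neg_of_neg ha1 ha2
  have hφp : φ ((c - C • (d - c)) - a) = 0 := by
    have heval : φ ((c - C • (d - c)) - a) = φ (c - a) - C * φ (d - c) := by
      simp only [map_sub, map_smul, smul_eq_mul]
      ring
    have hne : φ d - φ c ≠ 0 := by simpa [map_sub] using hφv
    rw [heval, hCdef]
    rw [show φ (c - a) = φ c - φ a by simp [map_sub], show φ (d - c) = φ d - φ c by simp [map_sub]]
    field_simp
    ring
  obtain ⟨s₀, hs⟩ := hker _ hφp
  have hind : ∀ s t : ℝ, s • (b - a) + t • (d - c) = 0 → s = 0 ∧ t = 0 := by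
    intro s t h
    have h0 : s * φ (b - a) + t * φ (d - c) = 0 := by
      have := congrArg φ h
      simpa [map_add, map_smul] using this
    rw [hφu, mul_zero, zero_add] at h0
    have ht : t = 0 := by
      rcases mul_eq_zero.mp h0 with h' | h'
      · exact h'
      · exact absurd h' hφv
    refine ⟨?_, ht⟩
    rw [ht, zero_smul, add_zero] at h
    rcases smul_eq_zero.mp h with h' | h'
    · exact h'
    · exact absurd h' hu
  have hind' : ∀ s t : ℝ, s • (a - b) + t • (d - c) = 0 → s = 0 ∧ t = 0 := by
    intro s t h
    have h' : (-s) • (b - a) + t • (d - c) = 0 := by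
      rw [← h]; module
    obtain ⟨h1, h2⟩ := hind _ _ h'
    exact ⟨by linarith, h2⟩
  rcases lt_or_ge s₀ 0 with hs₀ | hs₀
  · -- order p, a, b on L : the far point is b
    refine aux_far hsc (b - a) (d - c) hind (-s₀) C ‖b - c‖ ‖a - c‖ (by linarith) hC ?_ ?_ ?_ ?_
    · congr 1
      linear_combination (norm := module) hs
    · rw [hbc]
      congr 1
      linear_combination (norm := module) hs
    · congr 1
      linear_combination (norm := module) hs
    · rw [hac]
      congr 1
      linear_combination (norm := module) hs
  rcases le_or_gt s₀ 1 with hs₁ | hs₁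
  · -- p between a and b
    refine aux_mid hsc (b - a) (d - c) hind s₀ C ‖a - c‖ ‖b - c‖ hs₀ hs₁ hC ?_ ?_ ?_ ?_
    · congr 1
      linear_combination (norm := module) hs
    · rw [hac]
      congr 1
      linear_combination (norm := module) hs
    · congr 1
      linear_combination (norm := module) hs
    · rw [hbc]
      congr 1
      linear_combination (norm := module) hs
  · -- order a, b, p on L : the far point is a
    refine aux_far hsc (a - b) (d - c) hind' (s₀ - 1) C ‖a - c‖ ‖b - c‖ (by linarith) hC ?_ ?_ ?_ ?_
    · congr 1
      linear_combination (norm := module) hs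
    · rw [hac]
      congr 1
      linear_combination (norm := module) hs
    · congr 1
      linear_combination (norm := module) hs
    · rw [hbc]
      congr 1
      linear_combination (norm := module) hs

end StrictConvexSameSide

open StrictConvexSameSide in
/-- In a two-dimensional strictly convex real normed space, for any `a ≠ b` on a line `L`
and points `c, d` on the same side of `L`, if `‖a - c‖ = ‖a - d‖` and `‖b - c‖ = ‖b - d‖`,
then `c = d`.  "Same side of `L`" means that some nonzero linear functional vanishing on
the direction of `L` takes values of the same sign (both positive times positive, i.e.
product positive) at `c - a` and `d - a`, or both points lie on `L`. -/
theorem strictConvex_same_side_unique {Y : Type*} [NormedAddCommGroup Y] [NormedSpace ℝ Y]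
    (hdim : Module.finrank ℝ Y = 2)
    (hsc : ∀ a b : Y, a ≠ 0 → b ≠ 0 → ‖a + b‖ = ‖a‖ + ‖b‖ → ∃ γ : ℝ, 0 < γ ∧ a = γ • b)
    (a b c d : Y) (hab : a ≠ b)
    (hside : ∃ φ : Y →ₗ[ℝ] ℝ, φ ≠ 0 ∧ φ (b - a) = 0 ∧
      (0 < φ (c - a) * φ (d - a) ∨ (φ (c - a) = 0 ∧ φ (d - a) = 0)))
    (hac : ‖a - c‖ = ‖a - d‖) (hbc : ‖b - c‖ = ‖b - d‖) : c = d := by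
  obtain ⟨φ, hφ0, hφu, hside⟩ := hside
  have hu : b - a ≠ 0 := sub_ne_zero_of_ne (Ne.symm hab)
  have hker := ker_span hdim φ hφ0 hu hφu
  by_contra hcd
  have hn : 0 < ‖b - a‖ := norm_pos_iff.mpr hu
  rcases hside with hpos | ⟨hc0, hd0⟩
  · -- c and d strictly on the same side of L
    have hpc : φ (c - a) ≠ 0 := by
      intro h
      rw [h, zero_mul] at hpos
      exact lt_irrefl 0 hpos
    have hpd : φ (d - a) ≠ 0 := by
      intro h
      rw [h, mul_zero] at hpos
      exact lt_irrefl 0 hpos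
    by_cases hφv : φ (d - c) = 0
    · -- the line through c, d is parallel to L
      obtain ⟨μ, hμ⟩ := hker _ hφv
      have hμ0 : μ ≠ 0 := by
        intro h
        rw [h, zero_smul] at hμ
        exact hcd (sub_eq_zero.mp hμ).symm
      rcases lt_or_gt_of_ne hμ0 with hμneg | hμpos
      · -- swap the roles of c and d
        have hind2 : ∀ s t : ℝ, s • (d - a) + t • (b - a) = 0 → s = 0 ∧ t = 0 := by
          intro s t h
          have h0 : s * φ (d - a) + t * φ (b - a) = 0 := by
            have := congrArg φ h
            simpa [map_add, map_smul] using this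
          rw [hφu, mul_zero, add_zero] at h0
          have hsz : s = 0 := by
            rcases mul_eq_zero.mp h0 with h' | h'
            · exact h'
            · exact absurd h' hpd
          refine ⟨hsz, ?_⟩
          rw [hsz, zero_smul, zero_add] at h
          rcases smul_eq_zero.mp h with h' | h'
          · exact h'
          · exact absurd h' hu
        refine aux_par hsc (b - a) (d - a) hind2 (-μ) ‖a - d‖ ‖b - d‖ (by linarith) ?_ ?_ ?_ ?_
        · exact norm_sub_rev a d ▸ rfl
        · rw [← hac]
          have : (d - a) + (-μ) • (b - a) = c - a := by
            linear_combination (norm := module) hμ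
          rw [this, norm_sub_rev a c]
        · have : (d - a) - (b - a) = d - b := by module
          rw [this, norm_sub_rev b d]
        · rw [← hbc]
          have : (d - a) + (-μ) • (b - a) - (b - a) = c - b := by
            linear_combination (norm := module) hμ
          rw [this, norm_sub_rev b c]
      · have hind2 : ∀ s t : ℝ, s • (c - a) + t • (b - a) = 0 → s = 0 ∧ t = 0 := by
          intro s t h
          have h0 : s * φ (c - a) + t * φ (b - a) = 0 := by
            have := congrArg φ h
            simpa [map_add, map_smul] using this
          rw [hφu, mul_zero, add_zero] at h0
          have hsz : s = 0 := by
            rcases mul_eq_zero.mp h0 with h' | h'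
            · exact h'
            · exact absurd h' hpc
          refine ⟨hsz, ?_⟩
          rw [hsz, zero_smul, zero_add] at h
          rcases smul_eq_zero.mp h with h' | h'
          · exact h'
          · exact absurd h' hu
        refine aux_par hsc (b - a) (c - a) hind2 μ ‖a - c‖ ‖b - c‖ hμpos ?_ ?_ ?_ ?_
        · exact norm_sub_rev a c ▸ rfl
        · rw [hac]
          have : (c - a) + μ • (b - a) = d - a := by
            linear_combination (norm := module) -hμ
          rw [this, norm_sub_rev a d]
        · have : (c - a) - (b - a) = c - b := by module
          rw [this, norm_sub_rev b c]
        · rw [hbc]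
          have : (c - a) + μ • (b - a) - (b - a) = d - b := by
            linear_combination (norm := module) -hμ
          rw [this, norm_sub_rev b d]
    · -- the line through c, d meets L
      have hcd' : φ (c - d) ≠ 0 := by
        intro h
        apply hφv
        have : φ (d - c) = -φ (c - d) := by
          rw [show (d - c) = -(c - d) by module, map_neg]
        rw [this, h, neg_zero]
      have hdcsub : φ (d - c) = φ (d - a) - φ (c - a) := by
        simp only [map_sub]
        ring
      have hcdsub : φ (c - d) = φ (c - a) - φ (d - a) := by
        simp only [map_sub]
        ring
      have key : 0 < φ (c - a) * φ (d - c) ∨ 0 < φ (d - a) * φ (c - d) := by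
        have hne : φ (c - a) - φ (d - a) ≠ 0 := by rw [← hcdsub]; exact hcd'
        have hsq : 0 < (φ (c - a) - φ (d - a)) ^ 2 :=
          lt_of_le_of_ne (sq_nonneg _) (Ne.symm (pow_ne_zero 2 hne))
        rcases le_or_gt (φ (c - a) * φ (d - c)) 0 with h | h
        · right
          rw [hdcsub] at h
          rw [hcdsub]
          nlinarith [mul_pos hpos hsq]
        · left; exact h
      rcases key with k | k
      · exact caseB2 hsc a b c d φ hu hker hφu hφv k hac hbc
      · refine caseB2 hsc a b d c φ hu hker hφu hcd' k hac.symm hbc.symm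
  · -- both c and d on L
    obtain ⟨s, hsd⟩ := hker _ hc0
    obtain ⟨t, htd⟩ := hker _ hd0
    have e1 : a - c = (-s) • (b - a) := by linear_combination (norm := module) -hsd
    have e2 : a - d = (-t) • (b - a) := by linear_combination (norm := module) -htd
    have e3 : b - c = (1 - s) • (b - a) := by linear_combination (norm := module) -hsd
    have e4 : b - d = (1 - t) • (b - a) := by linear_combination (norm := module) -htd
    rw [e1, e2, norm_smul, norm_smul] at hac
    rw [e3, e4, norm_smul, norm_smul] at hbc
    simp only [Real.norm_eq_abs, abs_neg] at hac hbc
    have habs1 : |s| = |t| := mul_right_cancel₀ (ne_of_gt hn) hac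
    have habs2 : |1 - s| = |1 - t| := mul_right_cancel₀ (ne_of_gt hn) hbc
    have hsq1 : s ^ 2 = t ^ 2 := by rw [← sq_abs s, ← sq_abs t, habs1]
    have hsq2 : (1 - s) ^ 2 = (1 - t) ^ 2 := by rw [← sq_abs (1 - s), ← sq_abs (1 - t), habs2]
    have hst : s = t := by nlinarith
    apply hcd
    have : c - a = d - a := by rw [hsd, htd, hst]
    have := congrArg (· + a) this
    simpa using this
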